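/- Let σ : K* ⊗ H → k be a Hopf pairing between finite-dimensional Hopf algebras. The map ι : H → K^{op} ⊗ H, h ↦ Σ σ_r(S^{-1}(h₂)) ⊗ h₁ is an injective algebra homomorphism, and the map π : K^{op} ⊗ H → K^{op}, k ⊗ h ↦ k σ_r(h) is a surjective coalgebra homomorphism which is a map of right K^{op} ⊗ H-modules. -/

import Mathlib

open TensorProduct LinearMap Coalgebra Module

noncomputable section

variable (k : Type) [Field k]

/-- Convolution product of two linear functionals on a coalgebra. -/
def fconv (C : Type) [AddCommGroup C] [Module k C] [Coalgebra k C]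
    (f g : C →ₗ[k] k) : C →ₗ[k] k :=
  LinearMap.mul' k k ∘ₗ TensorProduct.map f g ∘ₗ Coalgebra.comul

/-- The comultiplication of the dual coalgebra of a finite-dimensional algebra. -/
def dcomul (K : Type) [Ring K] [Algebra k K] [Module.Finite k K] :
    Module.Dual k K →ₗ[k] Module.Dual k K ⊗[k] Module.Dual k K :=
  (TensorProduct.dualDistribEquiv k K K).symm.toLinearMap ∘ₗ (LinearMap.mul' k K).dualMap

variable (K H : Type) [Ring K] [Ring H] [HopfAlgebra k K] [HopfAlgebra k H]
  [Module.Finite k K] [Module.Finite k H]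

/-- The map `σ_r : H → K` induced by a pairing `σ : K* ⊗ H → k` (curried as `σ : K* → H*`),
via the canonical identification `K ≅ K**`. -/
def sigmaR (σ : Module.Dual k K →ₗ[k] Module.Dual k H) : H →ₗ[k] K :=
  (Module.evalEquiv k K).symm.toLinearMap ∘ₗ σ.flip

/-- The opposite multiplication of `K`, i.e. the multiplication of `K^{op}`
(`k ⊗ k' ↦ k' * k`), on the underlying space `K`. -/
def opMul : K ⊗[k] K →ₗ[k] K :=
  LinearMap.mul' k K ∘ₗ (TensorProduct.comm k K K).toLinearMap

/-- The multiplication of the tensor product algebra `K^{op} ⊗ H`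
(on the underlying space `K ⊗ H`). -/
def mulB : (K ⊗[k] H) ⊗[k] (K ⊗[k] H) →ₗ[k] K ⊗[k] H :=
  TensorProduct.map (opMul k K) (LinearMap.mul' k H)
    ∘ₗ (TensorProduct.tensorTensorTensorComm k K H K H).toLinearMap

/-- The unit of `K^{op} ⊗ H`. -/
def oneB : K ⊗[k] H := (1 : K) ⊗ₜ[k] (1 : H)

/-- The comultiplication of the tensor product coalgebra `K^{op} ⊗ H`
(`K^{op}` has the same comultiplication as `K`). -/
def comulB : K ⊗[k] H →ₗ[k] (K ⊗[k] H) ⊗[k] (K ⊗[k] H) :=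
  (TensorProduct.tensorTensorTensorComm k K K H H).toLinearMap
    ∘ₗ TensorProduct.map Coalgebra.comul Coalgebra.comul

/-- The counit of the coalgebra `K^{op} ⊗ H`. -/
def epsB : K ⊗[k] H →ₗ[k] k :=
  LinearMap.mul' k k ∘ₗ
    TensorProduct.map (Coalgebra.counit (R := k) (A := K)) (Coalgebra.counit (R := k) (A := H))

/-- The coaction `ρ : H → (K^{op} ⊗ H) ⊗ H`, `h ↦ Σ (σ_r(S⁻¹(h₍₃₎)) ⊗ h₍₁₎) ⊗ h₍₂₎`. -/
def rhoH (σ : Module.Dual k K →ₗ[k] Module.Dual k H) (Sinv : H →ₗ[k] H) :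
    H →ₗ[k] (K ⊗[k] H) ⊗[k] H :=
  (TensorProduct.assoc k K H H).symm.toLinearMap
    ∘ₗ TensorProduct.map (sigmaR k K H σ ∘ₗ Sinv) .id
    ∘ₗ (TensorProduct.comm k (H ⊗[k] H) H).toLinearMap
    ∘ₗ TensorProduct.map Coalgebra.comul .id ∘ₗ Coalgebra.comul

/-- The right `K^{op} ⊗ H`-action on `K^{op}`:
`l ⊗ (κ ⊗ h) ↦ κ l σ_r(h)`, where the product is written in `K`
(i.e. the element `κ * l * σ_r(h)` of `K`). -/
def actK (σ : Module.Dual k K →ₗ[k] Module.Dual k H) :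
    K ⊗[k] (K ⊗[k] H) →ₗ[k] K :=
  LinearMap.mul' k K
    ∘ₗ TensorProduct.map (LinearMap.mul' k K ∘ₗ (TensorProduct.comm k K K).toLinearMap) .id
    ∘ₗ (TensorProduct.assoc k K K K).symm.toLinearMap
    ∘ₗ TensorProduct.map .id (TensorProduct.map .id (sigmaR k K H σ))

/-- The map `ι : H → K^{op} ⊗ H`, `h ↦ Σ σ_r(S⁻¹(h₍₂₎)) ⊗ h₍₁₎`. -/
def iotaH (σ : Module.Dual k K →ₗ[k] Module.Dual k H) (Sinv : H →ₗ[k] H) :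
    H →ₗ[k] K ⊗[k] H :=
  TensorProduct.map (sigmaR k K H σ ∘ₗ Sinv) .id
    ∘ₗ (TensorProduct.comm k H H).toLinearMap ∘ₗ Coalgebra.comul

/-- The map `π : K^{op} ⊗ H → K^{op}`, `κ ⊗ h ↦ κ σ_r(h)` (product written in `K`). -/
def piB (σ : Module.Dual k K →ₗ[k] Module.Dual k H) : K ⊗[k] H →ₗ[k] K :=
  LinearMap.mul' k K ∘ₗ TensorProduct.map .id (sigmaR k K H σ)

namespace HopfAux

variable {R : Type} [Field R]

section Co
variable {A : Type} [AddCommGroup A] [Module R A] [Coalgebra R A]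

lemma repr_smul_right {ι : Type} {a : A} (r : Coalgebra.Repr R a ι) :
    ∑ i ∈ r.index, Coalgebra.counit (R := R) (r.right i) • r.left i = a := by
  have h := congrArg (TensorProduct.rid R A) (Coalgebra.sum_tmul_counit_eq (R := R) r)
  simp only [map_sum, TensorProduct.rid_tmul, one_smul] at h
  exact h

lemma repr_smul_left {ι : Type} {a : A} (r : Coalgebra.Repr R a ι) :
    ∑ i ∈ r.index, Coalgebra.counit (R := R) (r.left i) • r.right i = a := by
  have h := congrArg (TensorProduct.lid R A) (Coalgebra.sum_counit_tmul_eq (R := R) r)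
  simp only [map_sum, TensorProduct.lid_tmul, one_smul] at h
  exact h

end Co

section Hopf
variable {A : Type} [Ring A] [HopfAlgebra R A]

lemma sum3 {ι κ Λ : Type} (f g h : A →ₗ[R] A) {a : A} (r : Coalgebra.Repr R a ι)
    (rl : (i : r.ι) → Coalgebra.Repr R (r.left i) κ)
    (rr : (i : r.ι) → Coalgebra.Repr R (r.right i) Λ) :
    ∑ i ∈ r.index, ∑ j ∈ (rl i).index,
      f ((rl i).left j) * (g ((rl i).right j) * h (r.right i)) =
    ∑ i ∈ r.index, ∑ j ∈ (rr i).index,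
      f (r.left i) * (g ((rr i).left j) * h ((rr i).right j)) := by
  have h0 := Coalgebra.sum_tmul_tmul_eq (R := R) r rl rr
  have h1 := congrArg (LinearMap.mul' R A ∘ₗ LinearMap.lTensor A (LinearMap.mul' R A)
    ∘ₗ TensorProduct.map f (TensorProduct.map g h)) h0
  simpa [map_sum] using h1

/-- Product representation. -/
def mulRepr {ι ι' : Type} {a b : A} (ra : Coalgebra.Repr R a ι) (rb : Coalgebra.Repr R b ι') :
    Coalgebra.Repr R (a * b) (ι × ι') where
  index := ra.index ×ˢ rb.index
  left := fun p => ra.left p.1 * rb.left p.2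
  right := fun p => ra.right p.1 * rb.right p.2
  eq := by
    have h : CoalgebraStruct.comul (R := R) (a * b) = Coalgebra.comul a * Coalgebra.comul b :=
      Bialgebra.comul_mul a b
    rw [h, ← ra.eq, ← rb.eq, Finset.sum_mul_sum, Finset.sum_product]
    simp [Algebra.TensorProduct.tmul_mul_tmul]

lemma antipode_mul (a b : A) :
    HopfAlgebra.antipode (R := R) (a * b) =
      HopfAlgebra.antipode (R := R) b * HopfAlgebra.antipode (R := R) a := by
  let S : A →ₗ[R] A := HopfAlgebra.antipode (R := R)
  let ε : A →ₗ[R] R := Coalgebra.counit (R := R)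
  show S (a * b) = S b * S a
  set ra := ℛ R a with hra
  set rb := ℛ R b with hrb
  let rla : (i : ra.ι) → Coalgebra.Repr R (ra.left i) (A × A) := fun i => ℛ R (ra.left i)
  let rra : (i : ra.ι) → Coalgebra.Repr R (ra.right i) (A × A) := fun i => ℛ R (ra.right i)
  let rlb : (j : rb.ι) → Coalgebra.Repr R (rb.left j) (A × A) := fun j => ℛ R (rb.left j)
  let rrb : (j : rb.ι) → Coalgebra.Repr R (rb.right j) (A × A) := fun j => ℛ R (rb.right j)
  -- the middle term, in four orderings
  have claim1 :
      (∑ i ∈ ra.index, ∑ p ∈ (rra i).index, ∑ j ∈ rb.index, ∑ q ∈ (rrb j).index,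
        S (ra.left i * rb.left j) *
          (((rra i).left p * (rrb j).left q) *
            (S ((rrb j).right q) * S ((rra i).right p)))) = S (a * b) := by
    have step1 :
        (∑ i ∈ ra.index, ∑ p ∈ (rra i).index, ∑ j ∈ rb.index, ∑ q ∈ (rrb j).index,
          S (ra.left i * rb.left j) *
            (((rra i).left p * (rrb j).left q) *
              (S ((rrb j).right q) * S ((rra i).right p)))) =
        (∑ i ∈ ra.index, ∑ p ∈ (rra i).index, ∑ j ∈ rb.index,
          S (ra.left i * rb.left j) *
            ((rra i).left p *
              (algebraMap R A (Coalgebra.counit (R := R) (rb.right j)) *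
                S ((rra i).right p)))) := by
      refine Finset.sum_congr rfl fun i _ => Finset.sum_congr rfl fun p _ =>
        Finset.sum_congr rfl fun j _ => ?_
      rw [← HopfAlgebra.sum_mul_antipode_eq_algebraMap_counit (R := R) (rrb j)]
      simp only [Finset.sum_mul, Finset.mul_sum]
      exact Finset.sum_congr rfl fun q _ => by simp [mul_assoc, S]
    have step2 :
        (∑ i ∈ ra.index, ∑ p ∈ (rra i).index, ∑ j ∈ rb.index,
          S (ra.left i * rb.left j) *
            ((rra i).left p *
              (algebraMap R A (Coalgebra.counit (R := R) (rb.right j)) *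
                S ((rra i).right p)))) =
        (∑ i ∈ ra.index, ∑ p ∈ (rra i).index,
          S (ra.left i * b) * ((rra i).left p * S ((rra i).right p))) := by
      refine Finset.sum_congr rfl fun i _ => Finset.sum_congr rfl fun p _ => ?_
      conv_rhs => rw [← repr_smul_right (R := R) rb]
      simp [Finset.mul_sum, Finset.sum_mul, map_sum, map_smul, ← Algebra.smul_def,
        mul_smul_comm, smul_mul_assoc]
    have step3 :
        (∑ i ∈ ra.index, ∑ p ∈ (rra i).index,
          S (ra.left i * b) * ((rra i).left p * S ((rra i).right p))) =
        (∑ i ∈ ra.index,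
          S (ra.left i * b) * algebraMap R A (Coalgebra.counit (R := R) (ra.right i))) := by
      refine Finset.sum_congr rfl fun i _ => ?_
      rw [← HopfAlgebra.sum_mul_antipode_eq_algebraMap_counit (R := R) (rra i), Finset.mul_sum]
    have step4 :
        (∑ i ∈ ra.index,
          S (ra.left i * b) * algebraMap R A (Coalgebra.counit (R := R) (ra.right i))) =
        S (a * b) := by
      conv_rhs => rw [← repr_smul_right (R := R) ra]
      simp only [Finset.sum_mul, map_sum, map_smul, smul_mul_assoc]
      refine Finset.sum_congr rfl fun i _ => ?_
      rw [← Algebra.commutes, ← Algebra.smul_def]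
    exact ((step1.trans step2).trans step3).trans step4
  have claim2 :
      (∑ i ∈ ra.index, ∑ p ∈ (rra i).index, ∑ j ∈ rb.index, ∑ q ∈ (rrb j).index,
        S (ra.left i * rb.left j) *
          (((rra i).left p * (rrb j).left q) *
            (S ((rrb j).right q) * S ((rra i).right p)))) =
      (∑ i ∈ ra.index, ∑ p ∈ (rra i).index, ∑ j ∈ rb.index, ∑ q ∈ (rlb j).index,
        S (ra.left i * (rlb j).left q) *
          (((rra i).left p * (rlb j).right q) *
            (S (rb.right j) * S ((rra i).right p)))) := by
    refine Finset.sum_congr rfl fun i _ => Finset.sum_congr rfl fun p _ => ?_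
    have h := sum3 (S ∘ₗ LinearMap.mulLeft R (ra.left i))
      (LinearMap.mulLeft R ((rra i).left p))
      (LinearMap.mulRight R (S ((rra i).right p)) ∘ₗ S) rb rlb rrb
    simpa using h.symm
  have claim3 :
      (∑ i ∈ ra.index, ∑ p ∈ (rra i).index, ∑ j ∈ rb.index, ∑ q ∈ (rlb j).index,
        S (ra.left i * (rlb j).left q) *
          (((rra i).left p * (rlb j).right q) *
            (S (rb.right j) * S ((rra i).right p)))) =
      (∑ j ∈ rb.index, ∑ q ∈ (rlb j).index, ∑ i ∈ ra.index, ∑ p ∈ (rla i).index,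
        S ((rla i).left p * (rlb j).left q) *
          (((rla i).right p * (rlb j).right q) *
            (S (rb.right j) * S (ra.right i)))) := by
    have r1 : ∀ i ∈ ra.index,
        (∑ p ∈ (rra i).index, ∑ j ∈ rb.index, ∑ q ∈ (rlb j).index,
          S (ra.left i * (rlb j).left q) *
            (((rra i).left p * (rlb j).right q) *
              (S (rb.right j) * S ((rra i).right p)))) =
        (∑ j ∈ rb.index, ∑ q ∈ (rlb j).index, ∑ p ∈ (rra i).index,
          S (ra.left i * (rlb j).left q) *
            (((rra i).left p * (rlb j).right q) *
              (S (rb.right j) * S ((rra i).right p)))) := by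
      intro i _
      rw [Finset.sum_comm]
      exact Finset.sum_congr rfl fun j _ => Finset.sum_comm
    rw [Finset.sum_congr rfl r1, Finset.sum_comm]
    refine Finset.sum_congr rfl fun j _ => ?_
    rw [Finset.sum_comm]
    refine Finset.sum_congr rfl fun q _ => ?_
    have h := sum3 (S ∘ₗ LinearMap.mulRight R ((rlb j).left q))
      (LinearMap.mulRight R ((rlb j).right q))
      (LinearMap.mulLeft R (S (rb.right j)) ∘ₗ S) ra rla rra
    simpa using h.symm
  have claim4 :
      (∑ j ∈ rb.index, ∑ q ∈ (rlb j).index, ∑ i ∈ ra.index, ∑ p ∈ (rla i).index,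
        S ((rla i).left p * (rlb j).left q) *
          (((rla i).right p * (rlb j).right q) *
            (S (rb.right j) * S (ra.right i)))) = S b * S a := by
    have r1 : ∀ j ∈ rb.index,
        (∑ q ∈ (rlb j).index, ∑ i ∈ ra.index, ∑ p ∈ (rla i).index,
          S ((rla i).left p * (rlb j).left q) *
            (((rla i).right p * (rlb j).right q) *
              (S (rb.right j) * S (ra.right i)))) =
        (∑ i ∈ ra.index, ∑ p ∈ (rla i).index, ∑ q ∈ (rlb j).index,
          S ((rla i).left p * (rlb j).left q) *
            (((rla i).right p * (rlb j).right q) *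
              (S (rb.right j) * S (ra.right i)))) := by
      intro j _
      rw [Finset.sum_comm]
      exact Finset.sum_congr rfl fun i _ => Finset.sum_comm
    rw [Finset.sum_congr rfl r1]
    have r2 : ∀ j ∈ rb.index, ∀ i ∈ ra.index,
        (∑ p ∈ (rla i).index, ∑ q ∈ (rlb j).index,
          S ((rla i).left p * (rlb j).left q) *
            (((rla i).right p * (rlb j).right q) *
              (S (rb.right j) * S (ra.right i)))) =
        algebraMap R A (Coalgebra.counit (R := R) (ra.left i) *
            Coalgebra.counit (R := R) (rb.left j)) *
          (S (rb.right j) * S (ra.right i)) := by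
      intro j _ i _
      have e := HopfAlgebra.sum_antipode_mul_eq_algebraMap_counit (R := R) (mulRepr (rla i) (rlb j))
      simp only [mulRepr] at e
      rw [Finset.sum_product] at e
      calc (∑ p ∈ (rla i).index, ∑ q ∈ (rlb j).index,
          S ((rla i).left p * (rlb j).left q) *
            (((rla i).right p * (rlb j).right q) *
              (S (rb.right j) * S (ra.right i))))
          = (∑ p ∈ (rla i).index, ∑ q ∈ (rlb j).index,
              S ((rla i).left p * (rlb j).left q) *
                ((rla i).right p * (rlb j).right q)) *
              (S (rb.right j) * S (ra.right i)) := by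
            simp only [Finset.sum_mul]
            exact Finset.sum_congr rfl fun p _ => Finset.sum_congr rfl fun q _ => by
              simp [mul_assoc]
        _ = algebraMap R A (Coalgebra.counit (R := R) (ra.left i) *
              Coalgebra.counit (R := R) (rb.left j)) *
            (S (rb.right j) * S (ra.right i)) := by
            rw [e, Bialgebra.counit_mul]
    calc (∑ j ∈ rb.index, ∑ i ∈ ra.index, ∑ p ∈ (rla i).index, ∑ q ∈ (rlb j).index,
          S ((rla i).left p * (rlb j).left q) *
            (((rla i).right p * (rlb j).right q) *
              (S (rb.right j) * S (ra.right i))))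
        = ∑ j ∈ rb.index, ∑ i ∈ ra.index,
            algebraMap R A (Coalgebra.counit (R := R) (ra.left i) *
                Coalgebra.counit (R := R) (rb.left j)) *
              (S (rb.right j) * S (ra.right i)) := by
          exact Finset.sum_congr rfl fun j hj => Finset.sum_congr rfl fun i hi => r2 j hj i hi
      _ = S b * S a := by
          have ea : (∑ i ∈ ra.index,
              Coalgebra.counit (R := R) (ra.left i) • S (ra.right i)) = S a := by
            conv_rhs => rw [← repr_smul_left (R := R) ra]
            simp [map_sum, map_smul]
          have eb : (∑ j ∈ rb.index,
              Coalgebra.counit (R := R) (rb.left j) • S (rb.right j)) = S b := by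
            conv_rhs => rw [← repr_smul_left (R := R) rb]
            simp [map_sum, map_smul]
          calc (∑ j ∈ rb.index, ∑ i ∈ ra.index,
                algebraMap R A (Coalgebra.counit (R := R) (ra.left i) *
                    Coalgebra.counit (R := R) (rb.left j)) *
                  (S (rb.right j) * S (ra.right i)))
              = ∑ j ∈ rb.index, Coalgebra.counit (R := R) (rb.left j) •
                  (S (rb.right j) * ∑ i ∈ ra.index,
                    Coalgebra.counit (R := R) (ra.left i) • S (ra.right i)) := by
                refine Finset.sum_congr rfl fun j _ => ?_
                rw [Finset.mul_sum, Finset.smul_sum]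
                refine Finset.sum_congr rfl fun i _ => ?_
                rw [mul_smul_comm, smul_smul, mul_comm, Algebra.smul_def]
            _ = ∑ j ∈ rb.index, Coalgebra.counit (R := R) (rb.left j) •
                  (S (rb.right j) * S a) := by rw [ea]
            _ = (∑ j ∈ rb.index,
                  Coalgebra.counit (R := R) (rb.left j) • S (rb.right j)) * S a := by
                rw [Finset.sum_mul]
                exact Finset.sum_congr rfl fun j _ => (smul_mul_assoc _ _ _).symm
            _ = S b * S a := by rw [eb]
  exact claim1.symm.trans ((claim2.trans claim3).trans claim4)

lemma counit_antipode (a : A) :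
    Coalgebra.counit (R := R) (HopfAlgebra.antipode (R := R) a) = Coalgebra.counit (R := R) a := by
  set r := ℛ R a with hr
  have h1 := HopfAlgebra.sum_antipode_mul_eq_algebraMap_counit (R := R) r
  have h2 := congrArg (Coalgebra.counit (R := R)) h1
  simp only [map_sum, Bialgebra.counit_mul, Bialgebra.counit_algebraMap] at h2
  have h3 : Coalgebra.counit (R := R) (HopfAlgebra.antipode (R := R) a) =
      ∑ i ∈ r.index, Coalgebra.counit (R := R) (HopfAlgebra.antipode (R := R) (r.left i)) *
        Coalgebra.counit (R := R) (r.right i) := by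
    conv_lhs => rw [← repr_smul_right r]
    simp [Finset.mul_sum, Finset.sum_mul, map_sum, mul_comm]
  exact h3.trans h2

lemma antipode_one : HopfAlgebra.antipode (R := R) (1 : A) = 1 := by
  have h := HopfAlgebra.mul_antipode_rTensor_comul_apply (R := R) (A := A) (a := 1)
  simpa [Algebra.TensorProduct.one_def] using h

end Hopf



section SigmaLemmas

variable {K₁ H₁ : Type} [Ring K₁] [Ring H₁] [HopfAlgebra R K₁] [HopfAlgebra R H₁]
  [Module.Finite R K₁] [Module.Finite R H₁]

lemma dual_sep {V : Type} [AddCommGroup V] [Module R V] {x y : V}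
    (hxy : ∀ f : Module.Dual R V, f x = f y) : x = y := by
  have h0 := (Module.forall_dual_apply_eq_zero_iff R (x - y)).mp
    (fun f => by rw [map_sub, hxy f, sub_self])
  exact sub_eq_zero.mp h0

lemma apply_sigmaR (σ : Module.Dual R K₁ →ₗ[R] Module.Dual R H₁) (F : Module.Dual R K₁)
    (h : H₁) : F (sigmaR R K₁ H₁ σ h) = σ F h := by
  simp [sigmaR]

lemma ddE_tmul_apply (f g : Module.Dual R K₁) (y : K₁ ⊗[R] K₁) :
    TensorProduct.dualDistribEquiv R K₁ K₁ (f ⊗ₜ[R] g) y =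
      LinearMap.mul' R R (TensorProduct.map f g y) := by
  induction y using TensorProduct.induction_on with
  | zero => simp
  | tmul x z => simp [TensorProduct.dualDistribEquiv]
  | add u v hu hv => simp only [map_add, hu, hv]

lemma sigmaR_one (σ : Module.Dual R K₁ →ₗ[R] Module.Dual R H₁)
    (pair_one_right : ∀ f : Module.Dual R K₁, σ f 1 = f 1) :
    sigmaR R K₁ H₁ σ 1 = 1 :=
  dual_sep (R := R) fun f => by rw [apply_sigmaR, pair_one_right]

lemma sigmaR_mul (σ : Module.Dual R K₁ →ₗ[R] Module.Dual R H₁)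
    (pair_mul_right : ∀ (f : Module.Dual R K₁) (h h' : H₁),
      σ f (h * h') =
        (LinearMap.mul' R R ∘ₗ
          TensorProduct.map (LinearMap.applyₗ h ∘ₗ σ) (LinearMap.applyₗ h' ∘ₗ σ))
          (dcomul R K₁ f))
    (h h' : H₁) :
    sigmaR R K₁ H₁ σ (h * h') = sigmaR R K₁ H₁ σ h * sigmaR R K₁ H₁ σ h' := by
  refine dual_sep (R := R) fun f => ?_
  rw [apply_sigmaR, pair_mul_right]
  have key : ∀ u : Module.Dual R K₁ ⊗[R] Module.Dual R K₁,
      LinearMap.mul' R R (TensorProduct.map (LinearMap.applyₗ h ∘ₗ σ)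
        (LinearMap.applyₗ h' ∘ₗ σ) u) =
      TensorProduct.dualDistribEquiv R K₁ K₁ u
        (sigmaR R K₁ H₁ σ h ⊗ₜ[R] sigmaR R K₁ H₁ σ h') := by
    intro u
    induction u using TensorProduct.induction_on with
    | zero =>
        rw [map_zero, map_zero, map_zero]
        rfl
    | tmul p q =>
        rw [ddE_tmul_apply]
        simp [apply_sigmaR]
    | add u v hu hv => simp only [map_add, LinearMap.add_apply, hu, hv]
  rw [LinearMap.comp_apply, key]
  have hd : TensorProduct.dualDistribEquiv R K₁ K₁ (dcomul R K₁ f) =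
      (LinearMap.mul' R K₁).dualMap f :=
    (TensorProduct.dualDistribEquiv R K₁ K₁).apply_symm_apply _
  rw [hd]
  simp

lemma counit_sigmaR (σ : Module.Dual R K₁ →ₗ[R] Module.Dual R H₁)
    (pair_one_left : σ Coalgebra.counit = Coalgebra.counit) (h : H₁) :
    Coalgebra.counit (R := R) (sigmaR R K₁ H₁ σ h) = Coalgebra.counit (R := R) h := by
  rw [apply_sigmaR, pair_one_left]

lemma comul_sigmaR (σ : Module.Dual R K₁ →ₗ[R] Module.Dual R H₁)
    (pair_mul_left : ∀ f g : Module.Dual R K₁,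
      σ (fconv R K₁ f g) = fconv R H₁ (σ f) (σ g)) (h : H₁) :
    Coalgebra.comul (R := R) (sigmaR R K₁ H₁ σ h) =
      TensorProduct.map (sigmaR R K₁ H₁ σ) (sigmaR R K₁ H₁ σ)
        (Coalgebra.comul (R := R) h) := by
  refine dual_sep (R := R) fun φ => ?_
  obtain ⟨u, rfl⟩ := (TensorProduct.dualDistribEquiv R K₁ K₁).surjective φ
  induction u using TensorProduct.induction_on with
  | zero => rw [map_zero]; rfl
  | add u v hu hv => simp only [map_add, LinearMap.add_apply, hu, hv]
  | tmul f g =>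
      rw [ddE_tmul_apply, ddE_tmul_apply]
      have l1 : LinearMap.mul' R R (TensorProduct.map f g
          (Coalgebra.comul (R := R) (sigmaR R K₁ H₁ σ h))) =
          σ (fconv R K₁ f g) h := by
        rw [← apply_sigmaR σ (fconv R K₁ f g) h]
        rfl
      rw [l1, pair_mul_left]
      have hc : ∀ z : H₁ ⊗[R] H₁,
          TensorProduct.map f g (TensorProduct.map (sigmaR R K₁ H₁ σ) (sigmaR R K₁ H₁ σ) z) =
            TensorProduct.map (σ f) (σ g) z := by
        intro z
        induction z using TensorProduct.induction_on with
        | zero => simp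
        | tmul x y => simp [apply_sigmaR]
        | add u v hu hv => simp only [map_add, hu, hv]
      rw [hc]
      rfl

end SigmaLemmas


end HopfAux

/-- The map `ι : H → K^{op} ⊗ H`, `h ↦ Σ σ_r(S⁻¹(h₍₂₎)) ⊗ h₍₁₎`, is an
injective algebra homomorphism, and the map `π : K^{op} ⊗ H → K^{op}`, `κ ⊗ h ↦ κ σ_r(h)`,
is a surjective coalgebra homomorphism which is a map of right `K^{op} ⊗ H`-modules
(where `K^{op}` carries the action `l ⊗ (κ ⊗ h) ↦ κ l σ_r(h)`). -/
theorem iota_pi_properties (σ : Module.Dual k K →ₗ[k] Module.Dual k H)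
    (pair_mul_left : ∀ f g : Module.Dual k K, σ (fconv k K f g) = fconv k H (σ f) (σ g))
    (pair_mul_right : ∀ (f : Module.Dual k K) (h h' : H),
      σ f (h * h') =
        (LinearMap.mul' k k ∘ₗ
          TensorProduct.map (LinearMap.applyₗ h ∘ₗ σ) (LinearMap.applyₗ h' ∘ₗ σ))
          (dcomul k K f))
    (pair_one_left : σ Coalgebra.counit = Coalgebra.counit)
    (pair_one_right : ∀ f : Module.Dual k K, σ f 1 = f 1)
    (Sinv : H →ₗ[k] H)
    (hSinv₁ : Sinv ∘ₗ HopfAlgebra.antipode (R := k) = LinearMap.id)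
    (hSinv₂ : HopfAlgebra.antipode (R := k) ∘ₗ Sinv = LinearMap.id) :
    -- ι is injective
    Function.Injective (iotaH k K H σ Sinv) ∧
    -- ι is an algebra homomorphism into K^{op} ⊗ H
    iotaH k K H σ Sinv ∘ₗ LinearMap.mul' k H =
      mulB k K H ∘ₗ TensorProduct.map (iotaH k K H σ Sinv) (iotaH k K H σ Sinv) ∧
    iotaH k K H σ Sinv 1 = oneB k K H ∧
    -- π is surjective
    Function.Surjective (piB k K H σ) ∧
    -- π is a coalgebra homomorphism
    Coalgebra.comul ∘ₗ piB k K H σ =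
      TensorProduct.map (piB k K H σ) (piB k K H σ) ∘ₗ comulB k K H ∧
    Coalgebra.counit ∘ₗ piB k K H σ = epsB k K H ∧
    -- π is a map of right K^{op} ⊗ H-modules
    piB k K H σ ∘ₗ mulB k K H = actK k K H σ ∘ₗ TensorProduct.map (piB k K H σ) .id := by
  classical
  have smul : ∀ x y : H, sigmaR k K H σ (x * y) = sigmaR k K H σ x * sigmaR k K H σ y :=
    fun x y => HopfAux.sigmaR_mul σ pair_mul_right x y
  have sone : sigmaR k K H σ 1 = 1 := HopfAux.sigmaR_one σ pair_one_right
  have scomul : ∀ x : H, Coalgebra.comul (R := k) (sigmaR k K H σ x) =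
      TensorProduct.map (sigmaR k K H σ) (sigmaR k K H σ) (Coalgebra.comul (R := k) x) :=
    fun x => HopfAux.comul_sigmaR σ pair_mul_left x
  have scounit : ∀ x : H, Coalgebra.counit (R := k) (sigmaR k K H σ x) =
      Coalgebra.counit (R := k) x := fun x => HopfAux.counit_sigmaR σ pair_one_left x
  have hSinv₁' : ∀ x : H, Sinv (HopfAlgebra.antipode (R := k) x) = x := fun x => by
    simpa using DFunLike.congr_fun hSinv₁ x
  have hSinv₂' : ∀ x : H, HopfAlgebra.antipode (R := k) (Sinv x) = x := fun x => by
    simpa using DFunLike.congr_fun hSinv₂ x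
  have sinj : Function.Injective (HopfAlgebra.antipode (R := k) (A := H)) :=
    Function.LeftInverse.injective hSinv₁'
  have sinvmul : ∀ x y : H, Sinv (x * y) = Sinv y * Sinv x := fun x y => sinj (by
    rw [hSinv₂', HopfAux.antipode_mul, hSinv₂', hSinv₂'])
  have sinvone : Sinv (1 : H) = 1 := sinj (by rw [hSinv₂', HopfAux.antipode_one])
  have counit_sinv : ∀ x : H, Coalgebra.counit (R := k) (Sinv x) =
      Coalgebra.counit (R := k) x := fun x => by
    have h0 := HopfAux.counit_antipode (R := k) (Sinv x)
    rw [hSinv₂'] at h0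
    exact h0.symm
  have iota_apply : ∀ (h : H) {ι : Type} (r : Coalgebra.Repr k h ι),
      iotaH k K H σ Sinv h =
        ∑ i ∈ r.index, sigmaR k K H σ (Sinv (r.right i)) ⊗ₜ[k] r.left i := by
    intro h _ r
    have hc : Coalgebra.comul (R := k) h = ∑ i ∈ r.index, r.left i ⊗ₜ[k] r.right i := r.eq.symm
    simp [iotaH, hc, map_sum]
  have piB_tmul : ∀ (κ : K) (h : H),
      piB k K H σ (κ ⊗ₜ[k] h) = κ * sigmaR k K H σ h := by
    intro κ h; simp [piB]
  have mulB_tmul : ∀ (x u : K) (y v : H),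
      mulB k K H ((x ⊗ₜ[k] y) ⊗ₜ[k] (u ⊗ₜ[k] v)) = (u * x) ⊗ₜ[k] (y * v) := by
    intro x u y v; simp [mulB, opMul]
  refine ⟨?_, ?_, ?_, ?_, ?_, ?_, ?_⟩
  · -- injectivity of ι
    have retr : Function.LeftInverse
        (fun z => (TensorProduct.lid k H)
          (TensorProduct.map (Coalgebra.counit (R := k)) LinearMap.id z))
        (iotaH k K H σ Sinv) := by
      intro h
      rw [iota_apply h (ℛ k h)]
      dsimp only
      rw [map_sum, map_sum]
      calc (∑ i ∈ (ℛ k h).index, (TensorProduct.lid k H)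
            (TensorProduct.map (Coalgebra.counit (R := k)) LinearMap.id
              (sigmaR k K H σ (Sinv ((ℛ k h).right i)) ⊗ₜ[k] (ℛ k h).left i)))
          = ∑ i ∈ (ℛ k h).index,
              Coalgebra.counit (R := k) ((ℛ k h).right i) • (ℛ k h).left i := by
            refine Finset.sum_congr rfl fun i _ => ?_
            simp [scounit, counit_sinv]
        _ = h := HopfAux.repr_smul_right _
    exact retr.injective
  · -- ι is multiplicative
    refine TensorProduct.ext' fun h h' => ?_
    simp only [LinearMap.comp_apply, LinearMap.mul'_apply, TensorProduct.map_tmul]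
    have lhs_eq : iotaH k K H σ Sinv (h * h') =
        ∑ i ∈ (ℛ k h).index, ∑ j ∈ (ℛ k h').index,
          (sigmaR k K H σ (Sinv ((ℛ k h').right j)) *
              sigmaR k K H σ (Sinv ((ℛ k h).right i))) ⊗ₜ[k]
            ((ℛ k h).left i * (ℛ k h').left j) := by
      rw [iota_apply (h * h') (HopfAux.mulRepr (ℛ k h) (ℛ k h'))]
      simp only [HopfAux.mulRepr]
      rw [Finset.sum_product]
      refine Finset.sum_congr rfl fun i _ => Finset.sum_congr rfl fun j _ => ?_
      rw [sinvmul, smul]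
    have rhs_eq : mulB k K H (iotaH k K H σ Sinv h ⊗ₜ[k] iotaH k K H σ Sinv h') =
        ∑ i ∈ (ℛ k h).index, ∑ j ∈ (ℛ k h').index,
          (sigmaR k K H σ (Sinv ((ℛ k h').right j)) *
              sigmaR k K H σ (Sinv ((ℛ k h).right i))) ⊗ₜ[k]
            ((ℛ k h).left i * (ℛ k h').left j) := by
      rw [iota_apply h (ℛ k h), iota_apply h' (ℛ k h'), TensorProduct.sum_tmul, map_sum]
      refine Finset.sum_congr rfl fun i _ => ?_
      rw [TensorProduct.tmul_sum, map_sum]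
      exact Finset.sum_congr rfl fun j _ => mulB_tmul _ _ _ _
    rw [lhs_eq, rhs_eq]
  · -- ι is unital
    simp [iotaH, oneB, Algebra.TensorProduct.one_def, sinvone, sone]
  · -- π is surjective
    intro κ
    exact ⟨κ ⊗ₜ[k] 1, by rw [piB_tmul, sone, mul_one]⟩
  · -- π commutes with comultiplication
    refine TensorProduct.ext' fun κ h => ?_
    simp only [LinearMap.comp_apply]
    have lhs_eq : Coalgebra.comul (R := k) (piB k K H σ (κ ⊗ₜ[k] h)) =
        ∑ i ∈ (ℛ k κ).index, ∑ j ∈ (ℛ k h).index,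
          ((ℛ k κ).left i * sigmaR k K H σ ((ℛ k h).left j)) ⊗ₜ[k]
            ((ℛ k κ).right i * sigmaR k K H σ ((ℛ k h).right j)) := by
      rw [piB_tmul, Bialgebra.comul_mul, scomul]
      rw [← Coalgebra.Repr.eq (ℛ k κ), ← Coalgebra.Repr.eq (ℛ k h)]
      rw [map_sum, Finset.sum_mul_sum]
      refine Finset.sum_congr rfl fun i _ => Finset.sum_congr rfl fun j _ => ?_
      simp [Algebra.TensorProduct.tmul_mul_tmul]
    have rhs_eq : TensorProduct.map (piB k K H σ) (piB k K H σ) (comulB k K H (κ ⊗ₜ[k] h)) =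
        ∑ i ∈ (ℛ k κ).index, ∑ j ∈ (ℛ k h).index,
          ((ℛ k κ).left i * sigmaR k K H σ ((ℛ k h).left j)) ⊗ₜ[k]
            ((ℛ k κ).right i * sigmaR k K H σ ((ℛ k h).right j)) := by
      have hc : comulB k K H (κ ⊗ₜ[k] h) =
          ∑ i ∈ (ℛ k κ).index, ∑ j ∈ (ℛ k h).index,
            ((ℛ k κ).left i ⊗ₜ[k] (ℛ k h).left j) ⊗ₜ[k]
              ((ℛ k κ).right i ⊗ₜ[k] (ℛ k h).right j) := by
        simp only [comulB, LinearMap.comp_apply, TensorProduct.map_tmul]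
        rw [← Coalgebra.Repr.eq (ℛ k κ), ← Coalgebra.Repr.eq (ℛ k h)]
        rw [TensorProduct.sum_tmul, map_sum]
        refine Finset.sum_congr rfl fun i _ => ?_
        rw [TensorProduct.tmul_sum, map_sum]
        refine Finset.sum_congr rfl fun j _ => ?_
        simp [TensorProduct.tensorTensorTensorComm_tmul]
      rw [hc, map_sum]
      refine Finset.sum_congr rfl fun i _ => ?_
      rw [map_sum]
      refine Finset.sum_congr rfl fun j _ => ?_
      rw [TensorProduct.map_tmul, piB_tmul, piB_tmul]
    rw [lhs_eq, rhs_eq]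
  · -- π commutes with counit
    refine TensorProduct.ext' fun κ h => ?_
    simp only [LinearMap.comp_apply]
    rw [piB_tmul, Bialgebra.counit_mul, scounit]
    simp [epsB]
  · -- π is a module map
    refine TensorProduct.ext_fourfold' fun κ h κ' h' => ?_
    have actK_tmul : ∀ (l u : K) (v : H),
        actK k K H σ (l ⊗ₜ[k] (u ⊗ₜ[k] v)) = u * l * sigmaR k K H σ v := by
      intro l u v; simp [actK, mul_assoc]
    simp only [LinearMap.comp_apply, TensorProduct.map_tmul, LinearMap.id_coe, id_eq]
    rw [mulB_tmul, piB_tmul, piB_tmul, actK_tmul, smul]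
    simp [mul_assoc]
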